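/- The one-bit quantizer Q defined by setting every nonnegative coordinate of w to the mean of the nonnegative coordinates and every negative coordinate to the mean of the negative coordinates satisfies ‖Q(w) - w‖² ≤ (1 - 1/d)‖w‖² for all w ∈ ℝ^d. -/

import Mathlib

open scoped Classical

lemma sum_sq_le_sq_sum_abs {α} (S : Finset α) (f : α → ℝ) :
    ∑ i ∈ S, f i ^ 2 ≤ (∑ i ∈ S, |f i|) ^ 2 := by
  calc ∑ i ∈ S, f i ^ 2 = ∑ i ∈ S, |f i| * |f i| := by
        simp [sq_abs, sq]
    _ ≤ ∑ i ∈ S, |f i| * (∑ j ∈ S, |f j|) := by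
        refine Finset.sum_le_sum fun i hi => ?_
        exact mul_le_mul_of_nonneg_left
          (Finset.single_le_sum (f := fun j => |f j|) (fun j _ => abs_nonneg (f j)) hi)
          (abs_nonneg _)
    _ = (∑ i ∈ S, |f i|) ^ 2 := by rw [← Finset.sum_mul, sq]

lemma group_bound {α} (S : Finset α) (f : α → ℝ)
    (habs : (∑ i ∈ S, |f i|) ^ 2 = (∑ i ∈ S, f i) ^ 2) :
    ∑ i ∈ S, ((∑ j ∈ S, f j) / S.card - f i) ^ 2
      ≤ (1 - 1 / (S.card : ℝ)) * ∑ i ∈ S, f i ^ 2 := by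
  rcases S.eq_empty_or_nonempty with rfl | hS
  · simp
  have hk : (0:ℝ) < S.card := by exact_mod_cast Finset.card_pos.mpr hS
  have hexp : ∑ i ∈ S, ((∑ j ∈ S, f j) / S.card - f i) ^ 2
      = ∑ i ∈ S, f i ^ 2 - (∑ j ∈ S, f j) ^ 2 / S.card := by
    have h : ∀ i, ((∑ j ∈ S, f j) / S.card - f i) ^ 2
        = ((∑ j ∈ S, f j) / S.card)^2 - 2*((∑ j ∈ S, f j) / S.card)*f i + f i ^2 := by
      intro i; ring
    simp_rw [h]
    rw [Finset.sum_add_distrib, Finset.sum_sub_distrib, Finset.sum_const, ← Finset.mul_sum,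
      nsmul_eq_mul]
    field_simp
    ring
  rw [hexp]
  have h : ∑ i ∈ S, f i ^ 2 ≤ (∑ i ∈ S, f i) ^ 2 := habs ▸ sum_sq_le_sq_sum_abs S f
  have h2 : (∑ i ∈ S, f i ^ 2) / S.card ≤ (∑ i ∈ S, f i) ^ 2 / S.card := by gcongr
  have e : (1 - 1 / (S.card:ℝ)) * ∑ i ∈ S, f i ^ 2
      = ∑ i ∈ S, f i ^ 2 - (∑ i ∈ S, f i ^ 2) / S.card := by ring
  linarith

theorem stmt19 {d : ℕ} (hd : 0 < d) (w : EuclideanSpace ℝ (Fin d)) :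
    ‖(show EuclideanSpace ℝ (Fin d) from WithLp.toLp 2 fun i =>
        if 0 ≤ w i then
          (∑ j ∈ Finset.univ.filter (fun j : Fin d => 0 ≤ w j), w j) /
            (Finset.univ.filter (fun j : Fin d => 0 ≤ w j)).card
        else
          (∑ j ∈ Finset.univ.filter (fun j : Fin d => w j < 0), w j) /
            (Finset.univ.filter (fun j : Fin d => w j < 0)).card) - w‖ ^ 2
      ≤ (1 - 1 / (d : ℝ)) * ‖w‖ ^ 2 := by
  set P := Finset.univ.filter (fun j : Fin d => 0 ≤ w j) with hP
  set N := Finset.univ.filter (fun j : Fin d => w j < 0) with hN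
  have hnorm : ∀ v : EuclideanSpace ℝ (Fin d), ‖v‖ ^ 2 = ∑ i, v i ^ 2 := by
    intro v
    rw [EuclideanSpace.norm_eq, Real.sq_sqrt (by positivity)]
    simp [sq_abs]
  rw [hnorm, hnorm]
  have hsplit : ∀ g : Fin d → ℝ, ∑ i, g i = ∑ i ∈ P, g i + ∑ i ∈ N, g i := by
    intro g
    rw [hP, hN]
    rw [← Finset.sum_filter_add_sum_filter_not Finset.univ (fun j : Fin d => 0 ≤ w j) g]
    congr 1
    apply Finset.sum_congr _ (fun _ _ => rfl)
    ext j; simp [not_le]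
  have hsub : ∀ i : Fin d,
      ((show EuclideanSpace ℝ (Fin d) from WithLp.toLp 2 fun i =>
        if 0 ≤ w i then (∑ j ∈ P, w j) / P.card else (∑ j ∈ N, w j) / N.card) - w) i
      = (if 0 ≤ w i then (∑ j ∈ P, w j) / P.card else (∑ j ∈ N, w j) / N.card) - w i := by
    intro i; rfl
  simp_rw [hsub]
  rw [hsplit, hsplit (fun i => w i ^ 2)]
  have hPle : ∑ i ∈ P, ((if 0 ≤ w i then (∑ j ∈ P, w j) / P.card
        else (∑ j ∈ N, w j) / N.card) - w i) ^ 2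
      ≤ (1 - 1 / (P.card : ℝ)) * ∑ i ∈ P, w i ^ 2 := by
    have : ∀ i ∈ P, ((if 0 ≤ w i then (∑ j ∈ P, w j) / P.card
        else (∑ j ∈ N, w j) / N.card) - w i) ^ 2 = ((∑ j ∈ P, w j) / P.card - w i) ^ 2 := by
      intro i hi
      rw [hP] at hi
      simp only [Finset.mem_filter] at hi
      rw [if_pos hi.2]
    rw [Finset.sum_congr rfl this]
    apply group_bound
    congr 1
    apply Finset.sum_congr rfl
    intro i hi
    rw [hP] at hi; simp only [Finset.mem_filter] at hi
    exact abs_of_nonneg hi.2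
  have hNle : ∑ i ∈ N, ((if 0 ≤ w i then (∑ j ∈ P, w j) / P.card
        else (∑ j ∈ N, w j) / N.card) - w i) ^ 2
      ≤ (1 - 1 / (N.card : ℝ)) * ∑ i ∈ N, w i ^ 2 := by
    have : ∀ i ∈ N, ((if 0 ≤ w i then (∑ j ∈ P, w j) / P.card
        else (∑ j ∈ N, w j) / N.card) - w i) ^ 2 = ((∑ j ∈ N, w j) / N.card - w i) ^ 2 := by
      intro i hi
      rw [hN] at hi
      simp only [Finset.mem_filter] at hi
      rw [if_neg (not_le.mpr hi.2)]
    rw [Finset.sum_congr rfl this]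
    apply group_bound
    have habs : ∑ i ∈ N, |w i| = -∑ i ∈ N, w i := by
      rw [← Finset.sum_neg_distrib]
      apply Finset.sum_congr rfl
      intro i hi
      rw [hN] at hi; simp only [Finset.mem_filter] at hi
      exact abs_of_neg hi.2
    rw [habs]; ring
  -- now upgrade (1 - 1/card) to (1 - 1/d)
  have hup : ∀ S : Finset (Fin d), ∀ g : Fin d → ℝ,
      (1 - 1 / (S.card : ℝ)) * ∑ i ∈ S, g i ^ 2 ≤ (1 - 1 / (d:ℝ)) * ∑ i ∈ S, g i ^ 2 := by
    intro S g
    rcases S.eq_empty_or_nonempty with rfl | hS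
    · simp
    have h1 : (1:ℝ) ≤ S.card := by exact_mod_cast Finset.card_pos.mpr hS
    have h2 : (S.card : ℝ) ≤ d := by exact_mod_cast S.card_le_univ.trans_eq (by simp)
    have hsum : (0:ℝ) ≤ ∑ i ∈ S, g i ^ 2 := Finset.sum_nonneg fun i _ => sq_nonneg _
    apply mul_le_mul_of_nonneg_right _ hsum
    have : 1 / (d:ℝ) ≤ 1 / (S.card : ℝ) := by
      apply one_div_le_one_div_of_le (by linarith) h2
    linarith
  calc _ ≤ (1 - 1 / (P.card : ℝ)) * ∑ i ∈ P, w i ^ 2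
            + (1 - 1 / (N.card : ℝ)) * ∑ i ∈ N, w i ^ 2 := add_le_add hPle hNle
    _ ≤ (1 - 1 / (d:ℝ)) * ∑ i ∈ P, w i ^ 2 + (1 - 1 / (d:ℝ)) * ∑ i ∈ N, w i ^ 2 :=
        add_le_add (hup P w) (hup N w)
    _ = (1 - 1 / (d:ℝ)) * (∑ i ∈ P, w i ^ 2 + ∑ i ∈ N, w i ^ 2) := by ring
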